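/- Let M = {f_1,...,f_{4m+2}} ⊂ R^{2m+1} be as above, and let 0 < δ ≤ 1/10. Define P_δ = {θ ∈ R^{4m+2} : Σ_{i=4j+1}^{4j+4} θ_i = 2 for j = 0,...,m−1, θ_{4m+1}+θ_{4m+2} = 1, and |θ_i − 1/2| ≤ δ for all i}. Then P_δ is contained in the matroid polytope of M: for every θ ∈ P_δ and every S ⊆ M, Σ_{\{i : f_i ∈ S\}} θ_i ≤ rank(S), and Σ_{i=1}^{4m+2} θ_i = 2m+1. -/

import Mathlib

open Finset

noncomputable def nbM (m : ℕ) (i : Fin (4*m+2)) : Fin (2*m+1) → ℝ :=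
  if i.val = 4*m+1 then fun t => (-1 : ℝ) ^ (t : ℕ)
  else if i.val % 2 = 0 then
    fun t => if t.val = i.val / 2 then 1 else 0
  else
    fun t => if t.val = i.val / 2 then 1 else if t.val = i.val / 2 + 1 then -1 else 0

namespace Stmt7
open scoped Classical

variable (m : ℕ)

noncomputable def esp (u : ℕ) : Fin (2*m+1) → ℝ := fun τ => if τ.val = u then 1 else 0
noncomputable def erim (w : ℕ) : Fin (2*m+1) → ℝ :=
  fun τ => if τ.val = w then 1 else if τ.val = w+1 then -1 else 0

lemma erim_eq (w : ℕ) : erim m w = esp m w - esp m (w+1) := by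
  funext τ
  simp only [erim, esp, Pi.sub_apply]
  split_ifs <;> first | rfl | omega | norm_num


lemma nbM_spoke (i : Fin (4*m+2)) (u : ℕ) (h : i.val = 2*u) : nbM m i = esp m u := by
  unfold nbM esp
  rw [if_neg (by omega), if_pos (by omega)]
  have : i.val / 2 = u := by omega
  rw [this]

lemma nbM_rim (i : Fin (4*m+2)) (w : ℕ) (h : i.val = 2*w+1) (hw : w ≠ 2*m) :
    nbM m i = erim m w := by
  unfold nbM erim
  rw [if_neg (by omega), if_neg (by omega)]
  have : i.val / 2 = w := by omega
  rw [this]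

lemma nbM_v (i : Fin (4*m+2)) (h : i.val = 4*m+1) :
    nbM m i = fun t => (-1:ℝ)^(t.val) := by
  unfold nbM
  rw [if_pos h]


section Arith
variable (δ : ℝ) (f : ℕ → ℝ)

lemma sumT (hδ0 : 0 < δ)
    (hub : ∀ k, k < 4*m+2 → f k ≤ 1/2 + δ)
    (hlb : ∀ k, k < 4*m+2 → 1/2 - δ ≤ f k)
    (hblk : ∀ j, j < m → f (4*j) + f (4*j+1) + f (4*j+2) + f (4*j+3) = 2) :
    ∀ n a b, b - a ≤ n → a ≤ b → b ≤ 2*m →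
    ∑ k ∈ Finset.Ico (2*a) (2*b+1), f k ≤
      ((b - a : ℕ) : ℝ) + 1/2 + δ + (if a % 2 = 1 then 2*δ else 0) := by
  intro n
  induction n with
  | zero =>
    intro a b hba hab hb
    have hba' : b = a := by omega
    subst hba'
    rw [Nat.Ico_succ_singleton, Finset.sum_singleton]
    have h1 : f (2*b) ≤ 1/2 + δ := hub _ (by omega)
    split_ifs <;> simp <;> linarith
  | succ n ih =>
    intro a b hba hab hb
    rcases eq_or_lt_of_le hab with rfl | hlt
    · rw [Nat.Ico_succ_singleton, Finset.sum_singleton]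
      have h1 : f (2*a) ≤ 1/2 + δ := hub _ (by omega)
      split_ifs <;> simp <;> linarith
    · rcases Nat.mod_two_eq_zero_or_one a with ha | ha
      · -- a even
        obtain ⟨j, rfl⟩ : ∃ j, a = 2*j := ⟨a/2, by omega⟩
        rcases eq_or_lt_of_le (Nat.succ_le_of_lt hlt) with hb1 | hb2
        · -- b = a+1 : three elements
          have hj : j < m := by omega
          have hIco : 2*b+1 = (4*j+2)+1 := by omega
          have h2a : 2*(2*j) = 4*j := by ring
          rw [h2a, hIco, Finset.sum_Ico_succ_top (by omega),
            Finset.sum_Ico_succ_top (by omega), Finset.sum_Ico_succ_top (by omega),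
            Finset.Ico_self, Finset.sum_empty]
          have hB := hblk j hj
          have h3 : 1/2 - δ ≤ f (4*j+3) := hlb _ (by omega)
          have hba2 : b - 2*j = 1 := by omega
          rw [hba2]
          split_ifs <;> push_cast <;> linarith
        · -- b ≥ a+2 : peel a block
          have hj : j < m := by omega
          have h2a : 2*(2*j) = 4*j := by ring
          rw [h2a]
          rw [← Finset.sum_Ico_consecutive f (by omega : 4*j ≤ 4*j+4) (by omega : 4*j+4 ≤ 2*b+1)]
          have hfirst : ∑ k ∈ Finset.Ico (4*j) (4*j+4), f k = 2 := by
            rw [show 4*j+4 = (4*j+3)+1 by ring, Finset.sum_Ico_succ_top (by omega),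
              show 4*j+3 = (4*j+2)+1 by ring, Finset.sum_Ico_succ_top (by omega),
              show 4*j+2 = (4*j+1)+1 by ring, Finset.sum_Ico_succ_top (by omega),
              Finset.sum_Ico_succ_top (by omega), Finset.Ico_self, Finset.sum_empty]
            have hB := hblk j hj
            linarith
          have hsecond := ih (2*j+2) b (by omega) (by omega) hb
          have h2a2 : 2*(2*j+2) = 4*j+4 := by ring
          rw [h2a2] at hsecond
          simp only [if_neg (by omega : ¬ (2*j+2) % 2 = 1), add_zero] at hsecond
          have hcst : ((b - 2*j : ℕ):ℝ) = ((b - (2*j+2) : ℕ):ℝ) + 2 := by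
            have : b - 2*j = (b - (2*j+2)) + 2 := by omega
            rw [this]; push_cast; ring
          rw [hfirst, hcst]
          simp only [if_neg (by omega : ¬ (2*j) % 2 = 1), add_zero]
          linarith
      · -- a odd : peel two
        obtain ⟨j, rfl⟩ : ∃ j, a = 2*j+1 := ⟨a/2, by omega⟩
        have hj : j < m := by omega
        have h2a : 2*(2*j+1) = 4*j+2 := by ring
        rw [h2a]
        rw [← Finset.sum_Ico_consecutive f (by omega : 4*j+2 ≤ 4*j+4) (by omega : 4*j+4 ≤ 2*b+1)]
        have hfirst : ∑ k ∈ Finset.Ico (4*j+2) (4*j+4), f k = f (4*j+2) + f (4*j+3) := by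
          rw [show 4*j+4 = (4*j+3)+1 by ring, Finset.sum_Ico_succ_top (by omega),
            show 4*j+3 = (4*j+2)+1 by ring, Finset.sum_Ico_succ_top (by omega),
            Finset.Ico_self, Finset.sum_empty]
          ring
        have hB := hblk j hj
        have h0 : 1/2 - δ ≤ f (4*j) := hlb _ (by omega)
        have h1 : 1/2 - δ ≤ f (4*j+1) := hlb _ (by omega)
        have hsecond := ih (2*j+2) b (by omega) (by omega) hb
        have h2a2 : 2*(2*j+2) = 4*j+4 := by ring
        rw [h2a2] at hsecond
        simp only [if_neg (by omega : ¬ (2*j+2) % 2 = 1), add_zero] at hsecond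
        have hcst : ((b - (2*j+1) : ℕ):ℝ) = ((b - (2*j+2) : ℕ):ℝ) + 1 := by
          have : b - (2*j+1) = (b - (2*j+2)) + 1 := by omega
          rw [this]; push_cast; ring
        rw [hfirst, hcst]
        simp only [if_pos (by omega : (2*j+1) % 2 = 1)]
        linarith

end Arith

section Comb
variable (Sn : Finset ℕ)

noncomputable def Rims (a b : ℕ) : Finset ℕ := (Finset.Ico a b).filter fun w => 2*w+1 ∈ Sn

noncomputable def Jset : Finset ℕ :=
  (Finset.range (2*m+1)).filter fun t =>
    2*t ∈ Sn ∧ ∀ t' < t, 2*t' ∈ Sn → ∃ w, t' ≤ w ∧ w < t ∧ 2*w+1 ∉ Sn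

def Cut (x : ℕ) : Prop := x = 0 ∨ 2*x-1 ∉ Sn

def IsClass (α β : ℕ) : Prop :=
  α ≤ β ∧ β ≤ 2*m ∧ Cut Sn α ∧ (2*β+1 ∉ Sn) ∧ (∀ w, α ≤ w → w < β → 2*w+1 ∈ Sn)

def IsFree (α β : ℕ) : Prop :=
  IsClass m Sn α β ∧ ∀ t, α ≤ t → t ≤ β → 2*t ∉ Sn

lemma class_rims_card {α β : ℕ} (h : IsClass m Sn α β) :
    (Rims Sn α (β+1)).card = β - α := by
  obtain ⟨hab, hb, hc, hnr, hr⟩ := h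
  have : Rims Sn α (β+1) = Finset.Ico α β := by
    ext w
    simp only [Rims, Finset.mem_filter, Finset.mem_Ico]
    constructor
    · rintro ⟨⟨h1, h2⟩, h3⟩
      refine ⟨h1, ?_⟩
      rcases eq_or_lt_of_le (Nat.lt_succ_iff.mp h2) with rfl | h4
      · exact absurd h3 hnr
      · exact h4
    · intro ⟨h1, h2⟩
      exact ⟨⟨h1, by omega⟩, hr w h1 h2⟩
  rw [this, Nat.card_Ico]


lemma class_J_spoke_min {α β : ℕ} (h : IsClass m Sn α β)
    (hsp : ∃ t, α ≤ t ∧ t ≤ β ∧ 2*t ∈ Sn) :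
    Jset m Sn ∩ Finset.Ico α (β+1) = {(((Finset.Icc α β).filter (fun t => 2*t ∈ Sn)).min'
      (by obtain ⟨t, h1, h2, h3⟩ := hsp
          exact ⟨t, Finset.mem_filter.mpr ⟨Finset.mem_Icc.mpr ⟨h1, h2⟩, h3⟩⟩))} := by
  obtain ⟨hab, hb, hc, hnr, hr⟩ := h
  set Q := (Finset.Icc α β).filter (fun t => 2*t ∈ Sn) with hQ
  have hQne : Q.Nonempty := by
    obtain ⟨t, h1, h2, h3⟩ := hsp
    exact ⟨t, Finset.mem_filter.mpr ⟨Finset.mem_Icc.mpr ⟨h1, h2⟩, h3⟩⟩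
  set t0 := Q.min' hQne with ht0
  have ht0m : t0 ∈ Q := Q.min'_mem hQne
  rw [Finset.mem_filter, Finset.mem_Icc] at ht0m
  obtain ⟨⟨ht0a, ht0b⟩, ht0s⟩ := ht0m
  have ht0J : t0 ∈ Jset m Sn := by
    rw [Jset, Finset.mem_filter, Finset.mem_range]
    refine ⟨by omega, ht0s, ?_⟩
    intro t' ht' hs'
    by_cases hta : α ≤ t'
    · exfalso
      have : t' ∈ Q := Finset.mem_filter.mpr ⟨Finset.mem_Icc.mpr ⟨hta, by omega⟩, hs'⟩
      have := Q.min'_le t' this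
      omega
    · push_neg at hta
      refine ⟨α - 1, by omega, by omega, ?_⟩
      rcases hc with rfl | hcm
      · omega
      · have : 2*(α-1)+1 = 2*α-1 := by omega
        rw [this]; exact hcm
  ext t
  simp only [Finset.mem_inter, Finset.mem_Ico, Finset.mem_singleton]
  constructor
  · rintro ⟨htJ, hta, htb⟩
    rw [Jset, Finset.mem_filter, Finset.mem_range] at htJ
    obtain ⟨_, hts, hsep⟩ := htJ
    have : t ∈ Q := Finset.mem_filter.mpr ⟨Finset.mem_Icc.mpr ⟨hta, by omega⟩, hts⟩
    have hle : t0 ≤ t := Q.min'_le t this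
    rcases eq_or_lt_of_le hle with h' | h'
    · omega
    · exfalso
      obtain ⟨w, hw1, hw2, hw3⟩ := hsep t0 h' ht0s
      exact hw3 (hr w (by omega) (by omega))
  · rintro rfl
    exact ⟨ht0J, by omega, by omega⟩


lemma class_J_spoke {α β : ℕ} (h : IsClass m Sn α β)
    (hsp : ∃ t, α ≤ t ∧ t ≤ β ∧ 2*t ∈ Sn) :
    ∃ t0, Jset m Sn ∩ Finset.Ico α (β+1) = {t0} :=
  ⟨_, class_J_spoke_min m Sn h hsp⟩

lemma class_J_free {α β : ℕ} (hfree : ∀ t, α ≤ t → t ≤ β → 2*t ∉ Sn) :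
    Jset m Sn ∩ Finset.Ico α (β+1) = ∅ := by
  rw [Finset.eq_empty_iff_forall_notMem]
  intro t ht
  rw [Finset.mem_inter, Finset.mem_Ico] at ht
  obtain ⟨htJ, hta, htb⟩ := ht
  rw [Jset, Finset.mem_filter] at htJ
  exact hfree t hta (by omega) htJ.2.1


lemma first_class {a b : ℕ} (hab : a < b) (hb : b ≤ 2*m+1) (hca : Cut Sn a) (hcb : Cut Sn b) :
    ∃ c, a ≤ c ∧ c < b ∧ IsClass m Sn a c ∧ Cut Sn (c+1) := by
  have hcb' : 2*b-1 ∉ Sn := by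
    rcases hcb with h | h
    · omega
    · exact h
  set F := (Finset.Ico a b).filter (fun w => 2*w+1 ∉ Sn) with hF
  have hFne : F.Nonempty := by
    refine ⟨b-1, ?_⟩
    rw [hF, Finset.mem_filter, Finset.mem_Ico]
    refine ⟨⟨by omega, by omega⟩, ?_⟩
    rw [show 2*(b-1)+1 = 2*b-1 by omega]
    exact hcb'
  set c := F.min' hFne with hc
  have hcF : c ∈ F := F.min'_mem hFne
  rw [hF, Finset.mem_filter, Finset.mem_Ico] at hcF
  obtain ⟨⟨hca', hcb2⟩, hcnr⟩ := hcF
  have hcr : ∀ w, a ≤ w → w < c → 2*w+1 ∈ Sn := by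
    intro w hw1 hw2
    by_contra hcon
    have : w ∈ F := by
      rw [hF, Finset.mem_filter, Finset.mem_Ico]
      exact ⟨⟨hw1, by omega⟩, hcon⟩
    have := F.min'_le w this
    omega
  exact ⟨c, hca', hcb2, ⟨hca', by omega, hca, hcnr, hcr⟩,
    Or.inr (by rw [show 2*(c+1)-1 = 2*c+1 by omega]; exact hcnr)⟩


lemma parlem : ∀ n a b, b - a ≤ n → a ≤ b → b ≤ 2*m+1 → Cut Sn a → Cut Sn b →
    (b-a) % 2 = 1 →
    ∃ α β, a ≤ α ∧ α ≤ β ∧ β < b ∧ IsClass m Sn α β ∧ (β-α) % 2 = 0 := by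
  intro n
  induction n with
  | zero => intro a b h1 _ _ _ _ h6; omega
  | succ n ih =>
    intro a b hba hab hb hca hcb hpar
    have hlt : a < b := by omega
    obtain ⟨c, hc1, hc2, hclass, hcut⟩ := first_class m Sn hlt hb hca hcb
    by_cases hp : (c - a) % 2 = 0
    · exact ⟨a, c, le_refl a, hc1, hc2, hclass, hp⟩
    · obtain ⟨α, β, h1, h2, h3, h4, h5⟩ :=
        ih (c+1) b (by omega) (by omega) hb hcut hcb (by omega)
      exact ⟨α, β, by omega, h2, h3, h4, h5⟩

lemma lin_indep (hv : 4*m+1 ∉ Sn) :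
    LinearIndependent ℝ (Sum.elim (fun w : ↥(Rims Sn 0 (2*m+1)) => erim m w)
      (fun t : ↥(Jset m Sn) => esp m t)) := by
  set RW := Rims Sn 0 (2*m+1) with hRW
  set J := Jset m Sn with hJ
  have hRWmem : ∀ w ∈ RW, 2*w+1 ∈ Sn ∧ w < 2*m := by
    intro w hw
    rw [hRW, Rims, Finset.mem_filter, Finset.mem_Ico] at hw
    refine ⟨hw.2, ?_⟩
    rcases eq_or_lt_of_le (by omega : w ≤ 2*m) with hcase | h
    · exfalso
      apply hv
      rw [show 4*m+1 = 2*w+1 by omega]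
      exact hw.2
    · exact h
  rw [Fintype.linearIndependent_iff]
  intro g hg
  set ρ : ℕ → ℝ := fun w => if h : w ∈ RW then g (Sum.inl ⟨w, h⟩) else 0 with hρ
  set σ : ℕ → ℝ := fun t => if h : t ∈ J then g (Sum.inr ⟨t, h⟩) else 0 with hσ
  -- rewrite hg as sums over ranges
  have hsum : ∑ w ∈ Finset.range (2*m+1), ρ w • erim m w
      + ∑ t ∈ Finset.range (2*m+1), σ t • esp m t = 0 := by
    rw [Fintype.sum_sum_type] at hg
    simp only [Sum.elim_inl, Sum.elim_inr] at hg
    have e1 : ∑ w : ↥RW, g (Sum.inl w) • erim m ↑w = ∑ w ∈ Finset.range (2*m+1), ρ w • erim m w := by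
      have step1 : ∑ w : ↥RW, g (Sum.inl w) • erim m ↑w = ∑ w : ↥RW, ρ ↑w • erim m ↑w :=
        Finset.sum_congr rfl (fun w _ => by rw [hρ]; simp only [Subtype.coe_eta, dif_pos w.2])
      rw [step1, Finset.sum_coe_sort RW (fun w => ρ w • erim m w)]
      apply Finset.sum_subset
      · intro w hw
        rw [hRW, Rims, Finset.mem_filter, Finset.mem_Ico] at hw
        rw [Finset.mem_range]; omega
      · intro w _ hw
        rw [hρ]
        simp only [dif_neg hw, zero_smul]
    have e2 : ∑ t : ↥J, g (Sum.inr t) • esp m ↑t = ∑ t ∈ Finset.range (2*m+1), σ t • esp m t := by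
      have step1 : ∑ t : ↥J, g (Sum.inr t) • esp m ↑t = ∑ t : ↥J, σ ↑t • esp m ↑t :=
        Finset.sum_congr rfl (fun t _ => by rw [hσ]; simp only [Subtype.coe_eta, dif_pos t.2])
      rw [step1, Finset.sum_coe_sort J (fun t => σ t • esp m t)]
      apply Finset.sum_subset
      · intro t ht
        rw [hJ, Jset, Finset.mem_filter] at ht
        exact ht.1
      · intro t _ ht
        rw [hσ]
        simp only [dif_neg ht, zero_smul]
    rw [e1, e2] at hg
    exact hg
  -- coordinate equations
  have key : ∀ u, u ≤ 2*m → σ u + ρ u - (if u = 0 then 0 else ρ (u-1)) = 0 := by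
    intro u hu'
    have hu : u < 2*m+1 := by omega
    have hcf := congrFun hsum ⟨u, hu⟩
    rw [Pi.add_apply, Finset.sum_apply, Finset.sum_apply, Pi.zero_apply] at hcf
    have hτv : ((⟨u, hu⟩ : Fin (2*m+1)) : ℕ) = u := rfl
    have hspoke : ∑ t ∈ Finset.range (2*m+1), (σ t • esp m t) (⟨u, hu⟩ : Fin (2*m+1)) = σ u := by
      rw [Finset.sum_eq_single u]
      · simp [esp, hτv]
      · intro t _ htu
        simp only [Pi.smul_apply, esp, smul_eq_mul, hτv]
        rw [if_neg (fun h => htu h.symm)]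
        ring
      · intro h; exact absurd (Finset.mem_range.mpr hu) h
    have hrim : ∑ w ∈ Finset.range (2*m+1), (ρ w • erim m w) (⟨u, hu⟩ : Fin (2*m+1)) =
        ρ u - (if u = 0 then 0 else ρ (u-1)) := by
      by_cases hu0 : u = 0
      · rw [if_pos hu0, Finset.sum_eq_single 0]
        · simp only [Pi.smul_apply, erim, smul_eq_mul, hτv]
          rw [if_pos hu0, hu0]
          ring
        · intro w _ hw
          simp only [Pi.smul_apply, erim, smul_eq_mul, hτv]
          rw [if_neg (by omega), if_neg (by omega)]
          ring
        · intro h; exact absurd (Finset.mem_range.mpr (by omega)) h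
      · obtain ⟨p, hp⟩ : ∃ p, u = p + 1 := ⟨u - 1, by omega⟩
        have hsub : ({p, p+1} : Finset ℕ) ⊆ Finset.range (2*m+1) := by
          intro x hx
          simp only [Finset.mem_insert, Finset.mem_singleton] at hx
          rw [Finset.mem_range]
          omega
        rw [← Finset.sum_subset hsub ?hzero]
        case hzero =>
          intro w _ hw
          simp only [Finset.mem_insert, Finset.mem_singleton] at hw
          push_neg at hw
          simp only [Pi.smul_apply, erim, smul_eq_mul, hτv]
          rw [if_neg (by omega), if_neg (by omega)]
          ring
        rw [Finset.sum_insert (by simp), Finset.sum_singleton]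
        simp only [Pi.smul_apply, erim, smul_eq_mul, hτv]
        rw [if_neg (by omega : ¬ u = p), if_pos (by omega : u = p+1),
          if_pos (by omega : u = p+1), if_neg hu0]
        have hup : u - 1 = p := by omega
        rw [hup, show p+1 = u from hp.symm]
        ring
    rw [hspoke, hrim] at hcf
    linarith
  have hρtop : ρ (2*m) = 0 := by
    rw [hρ]
    have : 2*m ∉ RW := by
      intro h
      have := (hRWmem (2*m) h).2
      omega
    simp [this]
  have hρsupp : ∀ w, ρ w ≠ 0 → w ∈ RW := by
    intro w hw
    rw [hρ] at hw
    by_contra h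
    simp [h] at hw
  have hσsupp : ∀ t, σ t ≠ 0 → t ∈ J := by
    intro t ht
    rw [hσ] at ht
    by_contra h
    simp [h] at ht
  -- all ρ vanish
  have hρ0 : ∀ w, ρ w = 0 := by
    by_contra hcon
    push_neg at hcon
    obtain ⟨w0, hw0⟩ := hcon
    set W := (Finset.range (2*m+1)).filter (fun w => ρ w ≠ 0) with hW
    have hWne : W.Nonempty := by
      refine ⟨w0, ?_⟩
      rw [hW, Finset.mem_filter, Finset.mem_range]
      have := (hRWmem w0 (hρsupp w0 hw0)).2
      exact ⟨by omega, hw0⟩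
    set t0 := W.min' hWne with ht0
    have ht0W : t0 ∈ W := W.min'_mem hWne
    rw [hW, Finset.mem_filter, Finset.mem_range] at ht0W
    obtain ⟨ht0r, ht0ρ⟩ := ht0W
    have hmin : ∀ w < t0, ρ w = 0 := by
      intro w hw
      by_contra h
      have : w ∈ W := by
        rw [hW, Finset.mem_filter, Finset.mem_range]
        exact ⟨by omega, h⟩
      have := W.min'_le w this
      omega
    have hσt0 : σ t0 ≠ 0 := by
      have hk := key t0 (by omega)
      by_cases h0 : t0 = 0
      · rw [if_pos h0] at hk
        intro h
        rw [h] at hk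
        simp at hk
        exact ht0ρ hk
      · rw [if_neg h0, hmin (t0-1) (by omega)] at hk
        intro h
        rw [h] at hk
        simp at hk
        exact ht0ρ hk
    have ht0J : t0 ∈ J := hσsupp t0 hσt0
    have ht0Jm := ht0J
    rw [hJ, Jset, Finset.mem_filter, Finset.mem_range] at ht0Jm
    obtain ⟨ht02m, ht0S, ht0sep⟩ := ht0Jm
    have hconst : ∀ d, t0 + d ≤ 2*m → (∀ t, t0 < t → t ≤ t0 + d → t ∉ J) → ρ (t0+d) = ρ t0 := by
      intro d
      induction d with
      | zero => intro _ _; rfl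
      | succ d ihd =>
        intro hd hnJ
        have hσz : σ (t0+d+1) = 0 := by
          by_contra h
          exact hnJ (t0+d+1) (by omega) (by omega) (hσsupp _ h)
        have hk := key (t0+d+1) (by omega)
        rw [if_neg (by omega), hσz] at hk
        have : t0+d+1-1 = t0+d := by omega
        rw [this] at hk
        have := ihd (by omega) (fun t h1 h2 => hnJ t h1 (by omega))
        rw [show t0 + (d+1) = t0+d+1 by omega]
        linarith
    set U := (Finset.range (2*m+1)).filter (fun t => t0 < t ∧ t ∈ J) with hU
    by_cases hUne : U.Nonempty
    · set t1 := U.min' hUne with ht1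
      have ht1U : t1 ∈ U := U.min'_mem hUne
      rw [hU, Finset.mem_filter, Finset.mem_range] at ht1U
      obtain ⟨ht1r, ht1gt, ht1J⟩ := ht1U
      have ht1Jm := ht1J
      rw [hJ, Jset, Finset.mem_filter, Finset.mem_range] at ht1Jm
      obtain ⟨_, ht1S, ht1sep⟩ := ht1Jm
      obtain ⟨w, hw1, hw2, hw3⟩ := ht1sep t0 ht1gt ht0S
      have hUmin : ∀ t, t0 < t → t < t1 → t ∉ J := by
        intro t h1 h2 hJt
        have : t ∈ U := by
          rw [hU, Finset.mem_filter, Finset.mem_range]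
          exact ⟨by omega, h1, hJt⟩
        have := U.min'_le t this
        omega
      have hρw : ρ w = ρ t0 := by
        have := hconst (w - t0) (by omega) (fun t h1 h2 => hUmin t h1 (by omega))
        rwa [show t0 + (w - t0) = w by omega] at this
      have : ρ w ≠ 0 := by rw [hρw]; exact ht0ρ
      have := (hRWmem w (hρsupp w this)).1
      exact hw3 this
    · rw [Finset.not_nonempty_iff_eq_empty] at hUne
      have hnoJ : ∀ t, t0 < t → t ≤ 2*m → t ∉ J := by
        intro t h1 h2 hJt
        have : t ∈ U := by
          rw [hU, Finset.mem_filter, Finset.mem_range]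
          exact ⟨by omega, h1, hJt⟩
        rw [hUne] at this
        exact absurd this (Finset.notMem_empty t)
      have := hconst (2*m - t0) (by omega) (fun t h1 h2 => hnoJ t h1 (by omega))
      rw [show t0 + (2*m - t0) = 2*m by omega] at this
      rw [hρtop] at this
      exact ht0ρ this.symm
  have hσ0 : ∀ u, u ≤ 2*m → σ u = 0 := by
    intro u hu
    have hk := key u hu
    rw [hρ0 u] at hk
    by_cases h0 : u = 0
    · rw [if_pos h0] at hk; linarith
    · rw [if_neg h0, hρ0 (u-1)] at hk; linarith
  intro i
  match i with
  | Sum.inl ⟨w, hw⟩ =>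
    have := hρ0 w
    rw [hρ] at this
    simpa [dif_pos hw] using this
  | Sum.inr ⟨t, ht⟩ =>
    have htr : t < 2*m+1 := by
      have := ht
      rw [hJ, Jset, Finset.mem_filter, Finset.mem_range] at this
      exact this.1
    have := hσ0 t (by omega)
    rw [hσ] at this
    simpa [dif_pos ht] using this

lemma class_around (hv : 4*m+1 ∉ Sn) {u : ℕ} (hu : u ≤ 2*m) :
    ∃ α β, α ≤ u ∧ u ≤ β ∧ IsClass m Sn α β := by
  classical
  have hNne : ((Finset.Icc u (2*m)).filter (fun w => 2*w+1 ∉ Sn)).Nonempty := by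
    refine ⟨2*m, ?_⟩
    rw [Finset.mem_filter, Finset.mem_Icc]
    exact ⟨⟨hu, le_refl _⟩, by rw [show 2*(2*m)+1 = 4*m+1 by ring]; exact hv⟩
  obtain ⟨hβmem, hβ3⟩ := Finset.mem_filter.mp
    (Finset.min'_mem _ hNne)
  set β := ((Finset.Icc u (2*m)).filter (fun w => 2*w+1 ∉ Sn)).min' hNne with hβdef
  rw [Finset.mem_Icc] at hβmem
  obtain ⟨hβ1, hβ2⟩ := hβmem
  have hβmin : ∀ w, u ≤ w → w < β → 2*w+1 ∈ Sn := by
    intro w hw1 hw2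
    by_contra hcon
    have hwN : w ∈ (Finset.Icc u (2*m)).filter (fun w => 2*w+1 ∉ Sn) := by
      rw [Finset.mem_filter, Finset.mem_Icc]
      exact ⟨⟨hw1, by omega⟩, hcon⟩
    have := Finset.min'_le _ w hwN
    omega
  by_cases hMne : ((Finset.range u).filter (fun w => 2*w+1 ∉ Sn)).Nonempty
  · obtain ⟨hamem, ha2⟩ := Finset.mem_filter.mp (Finset.max'_mem _ hMne)
    set a := ((Finset.range u).filter (fun w => 2*w+1 ∉ Sn)).max' hMne with hadef
    rw [Finset.mem_range] at hamem
    have hamax : ∀ w, a < w → w < u → 2*w+1 ∈ Sn := by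
      intro w hw1 hw2
      by_contra hcon
      have hwM : w ∈ (Finset.range u).filter (fun w => 2*w+1 ∉ Sn) := by
        rw [Finset.mem_filter, Finset.mem_range]
        exact ⟨hw2, hcon⟩
      have := Finset.le_max' _ w hwM
      omega
    refine ⟨a+1, β, by omega, hβ1, by omega, hβ2, Or.inr ?_, hβ3, ?_⟩
    · have heq : 2*(a+1)-1 = 2*a+1 := by omega
      rw [heq]
      exact ha2
    · intro w hw1 hw2
      by_cases hwu : w < u
      · exact hamax w (by omega) hwu
      · exact hβmin w (by omega) hw2
  · refine ⟨0, β, by omega, hβ1, by omega, hβ2, Or.inl rfl, hβ3, ?_⟩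
    intro w hw1 hw2
    by_cases hwu : w < u
    · by_contra hcon
      exact hMne ⟨w, Finset.mem_filter.mpr ⟨Finset.mem_range.mpr hwu, hcon⟩⟩
    · exact hβmin w (by omega) hw2


end Comb

section Pieces
variable (Sn : Finset ℕ) (δ : ℝ) (f : ℕ → ℝ)

lemma class_piece_any (hδ0 : 0 < δ)
    (hub : ∀ k, k < 4*m+2 → f k ≤ 1/2 + δ)
    (hlb : ∀ k, k < 4*m+2 → 1/2 - δ ≤ f k)
    (hblk : ∀ j, j < m → f (4*j) + f (4*j+1) + f (4*j+2) + f (4*j+3) = 2)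
    (hδh : δ ≤ 1/2)
    {α β : ℕ} (h : IsClass m Sn α β) :
    ∑ k ∈ Sn.filter (fun k => 2*α ≤ k ∧ k < 2*β+2), f k ≤ ((β - α : ℕ):ℝ) + 1/2 + 3*δ := by
  obtain ⟨hab, hb, hc, hnr, hr⟩ := h
  have hsub : Sn.filter (fun k => 2*α ≤ k ∧ k < 2*β+2) ⊆ Finset.Ico (2*α) (2*β+1) := by
    intro k hk
    rw [Finset.mem_filter] at hk
    obtain ⟨hks, hk1, hk2⟩ := hk
    rw [Finset.mem_Ico]
    refine ⟨hk1, ?_⟩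
    rcases eq_or_lt_of_le (by omega : k ≤ 2*β+1) with rfl | h'
    · exact absurd hks hnr
    · exact h'
  have h1 : ∑ k ∈ Sn.filter (fun k => 2*α ≤ k ∧ k < 2*β+2), f k ≤
      ∑ k ∈ Finset.Ico (2*α) (2*β+1), f k := by
    apply Finset.sum_le_sum_of_subset_of_nonneg hsub
    intro k hk _
    rw [Finset.mem_Ico] at hk
    have := hlb k (by omega)
    linarith
  have h2 := sumT m δ f hδ0 hub hlb hblk β α β (by omega) hab hb
  split_ifs at h2 <;> linarith


lemma class_piece_free (hδ0 : 0 < δ)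
    (hub : ∀ k, k < 4*m+2 → f k ≤ 1/2 + δ)
    {α β : ℕ} (h : IsClass m Sn α β)
    (hfree : ∀ t, α ≤ t → t ≤ β → 2*t ∉ Sn) :
    ∑ k ∈ Sn.filter (fun k => 2*α ≤ k ∧ k < 2*β+2), f k ≤ ((β - α : ℕ):ℝ) * (1/2 + δ) := by
  obtain ⟨hab, hb, hc, hnr, hr⟩ := h
  have hsub : Sn.filter (fun k => 2*α ≤ k ∧ k < 2*β+2) ⊆
      (Finset.Ico α β).image (fun w => 2*w+1) := by
    intro k hk
    rw [Finset.mem_filter] at hk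
    obtain ⟨hks, hk1, hk2⟩ := hk
    rw [Finset.mem_image]
    rcases Nat.even_or_odd k with ⟨t, rfl⟩ | ⟨w, rfl⟩
    · exfalso
      exact hfree t (by omega) (by omega) (by rwa [show 2*t = t+t by ring])
    · refine ⟨w, Finset.mem_Ico.mpr ⟨by omega, ?_⟩, rfl⟩
      rcases eq_or_lt_of_le (by omega : w ≤ β) with rfl | h'
      · exact absurd hks hnr
      · exact h'
  calc ∑ k ∈ Sn.filter (fun k => 2*α ≤ k ∧ k < 2*β+2), f k
      ≤ (Sn.filter (fun k => 2*α ≤ k ∧ k < 2*β+2)).card • (1/2 + δ) := by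
        apply Finset.sum_le_card_nsmul
        intro k hk
        have hk' := hsub hk
        rw [Finset.mem_image] at hk'
        obtain ⟨w, hw, rfl⟩ := hk'
        rw [Finset.mem_Ico] at hw
        exact hub _ (by omega)
    _ ≤ ((β - α : ℕ):ℝ) * (1/2 + δ) := by
        rw [nsmul_eq_mul]
        have hcard : (Sn.filter (fun k => 2*α ≤ k ∧ k < 2*β+2)).card ≤ β - α := by
          calc _ ≤ ((Finset.Ico α β).image (fun w => 2*w+1)).card := Finset.card_le_card hsub
            _ ≤ (Finset.Ico α β).card := Finset.card_image_le
            _ = β - α := Nat.card_Ico _ _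
        have : ((Sn.filter (fun k => 2*α ≤ k ∧ k < 2*β+2)).card :ℝ) ≤ ((β - α:ℕ):ℝ) := by
          exact_mod_cast hcard
        nlinarith [hδ0]


lemma ilemma (hδ0 : 0 < δ)
    (hub : ∀ k, k < 4*m+2 → f k ≤ 1/2 + δ)
    (hlb : ∀ k, k < 4*m+2 → 1/2 - δ ≤ f k)
    (hblk : ∀ j, j < m → f (4*j) + f (4*j+1) + f (4*j+2) + f (4*j+3) = 2)
    (hδh : δ ≤ 1/10) :
    ∀ n a b, b - a ≤ n → a ≤ b → b ≤ 2*m+1 → Cut Sn a → Cut Sn b →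
    ∑ k ∈ Sn.filter (fun k => 2*a ≤ k ∧ k < 2*b), f k ≤
      ((Rims Sn a b).card : ℝ) + (1/2 + 3*δ) * ((Jset m Sn ∩ Finset.Ico a b).card : ℝ) := by
  intro n
  induction n with
  | zero =>
    intro a b hba hab hb hca hcb
    have : b = a := by omega
    subst this
    have hempty : Sn.filter (fun k => 2*b ≤ k ∧ k < 2*b) = ∅ := by
      apply Finset.filter_false_of_mem
      intro k _
      omega
    rw [hempty, Finset.sum_empty]
    positivity
  | succ n ih =>
    intro a b hba hab hb hca hcb
    rcases eq_or_lt_of_le hab with rfl | hlt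
    · have hempty : Sn.filter (fun k => 2*a ≤ k ∧ k < 2*a) = ∅ := by
        apply Finset.filter_false_of_mem
        intro k _
        omega
      rw [hempty, Finset.sum_empty]
      positivity
    · -- a < b
      have hb0 : b ≠ 0 := by omega
      have hcb' : 2*b-1 ∉ Sn := by
        rcases hcb with h | h
        · omega
        · exact h
      set F := (Finset.Ico a b).filter (fun w => 2*w+1 ∉ Sn) with hF
      have hFne : F.Nonempty := by
        refine ⟨b-1, ?_⟩
        rw [hF, Finset.mem_filter, Finset.mem_Ico]
        refine ⟨⟨by omega, by omega⟩, ?_⟩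
        rw [show 2*(b-1)+1 = 2*b-1 by omega]
        exact hcb'
      set c := F.min' hFne with hc
      have hcF : c ∈ F := F.min'_mem hFne
      rw [hF, Finset.mem_filter, Finset.mem_Ico] at hcF
      obtain ⟨⟨hca', hcb2⟩, hcnr⟩ := hcF
      have hcr : ∀ w, a ≤ w → w < c → 2*w+1 ∈ Sn := by
        intro w hw1 hw2
        by_contra hcon
        have : w ∈ F := by
          rw [hF, Finset.mem_filter, Finset.mem_Ico]
          exact ⟨⟨hw1, by omega⟩, hcon⟩
        have := F.min'_le w this
        omega
      have hclass : IsClass m Sn a c := ⟨hca', by omega, hca, hcnr, hcr⟩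
      -- split the sum
      have hU : Sn.filter (fun k => 2*a ≤ k ∧ k < 2*b) =
          Sn.filter (fun k => 2*a ≤ k ∧ k < 2*c+2) ∪
          Sn.filter (fun k => 2*(c+1) ≤ k ∧ k < 2*b) := by
        ext k
        simp only [Finset.mem_filter, Finset.mem_union]
        constructor
        · rintro ⟨hk, h1, h2⟩
          by_cases h3 : k < 2*c+2
          · exact Or.inl ⟨hk, h1, h3⟩
          · exact Or.inr ⟨hk, by omega, h2⟩
        · rintro (⟨hk, h1, h2⟩ | ⟨hk, h1, h2⟩)
          · exact ⟨hk, h1, by omega⟩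
          · exact ⟨hk, by omega, h2⟩
      have hdisj : Disjoint (Sn.filter (fun k => 2*a ≤ k ∧ k < 2*c+2))
          (Sn.filter (fun k => 2*(c+1) ≤ k ∧ k < 2*b)) := by
        rw [Finset.disjoint_left]
        intro k h1 h2
        rw [Finset.mem_filter] at h1 h2
        omega
      rw [hU, Finset.sum_union hdisj]
      -- split Rims
      have hRU : Rims Sn a b = Rims Sn a (c+1) ∪ Rims Sn (c+1) b := by
        rw [Rims, Rims, Rims, ← Finset.filter_union,
          Finset.Ico_union_Ico_eq_Ico (by omega) (by omega)]
      have hRdisj : Disjoint (Rims Sn a (c+1)) (Rims Sn (c+1) b) := by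
        rw [Finset.disjoint_left]
        intro w h1 h2
        rw [Rims, Finset.mem_filter, Finset.mem_Ico] at h1 h2
        omega
      have hRcard : (Rims Sn a b).card = (Rims Sn a (c+1)).card + (Rims Sn (c+1) b).card := by
        rw [hRU, Finset.card_union_of_disjoint hRdisj]
      -- split J
      have hJU : Jset m Sn ∩ Finset.Ico a b =
          (Jset m Sn ∩ Finset.Ico a (c+1)) ∪ (Jset m Sn ∩ Finset.Ico (c+1) b) := by
        rw [← Finset.inter_union_distrib_left,
          Finset.Ico_union_Ico_eq_Ico (by omega) (by omega)]
      have hJdisj : Disjoint (Jset m Sn ∩ Finset.Ico a (c+1)) (Jset m Sn ∩ Finset.Ico (c+1) b) := by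
        rw [Finset.disjoint_left]
        intro w h1 h2
        rw [Finset.mem_inter, Finset.mem_Ico] at h1 h2
        omega
      have hJcard : (Jset m Sn ∩ Finset.Ico a b).card =
          (Jset m Sn ∩ Finset.Ico a (c+1)).card + (Jset m Sn ∩ Finset.Ico (c+1) b).card := by
        rw [hJU, Finset.card_union_of_disjoint hJdisj]
      -- second piece via ih
      have hcut2 : Cut Sn (c+1) := by
        right
        rw [show 2*(c+1)-1 = 2*c+1 by omega]
        exact hcnr
      have hp2 := ih (c+1) b (by omega) (by omega) hb hcut2 hcb
      -- first piece
      have hRc := class_rims_card m Sn hclass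
      by_cases hsp : ∃ t, a ≤ t ∧ t ≤ c ∧ 2*t ∈ Sn
      · have hp1 := class_piece_any m Sn δ f hδ0 hub hlb hblk (by linarith) hclass
        obtain ⟨t0, hJ1⟩ := class_J_spoke m Sn hclass hsp
        have hJ1card : (Jset m Sn ∩ Finset.Ico a (c+1)).card = 1 := by
          rw [hJ1, Finset.card_singleton]
        rw [hRcard, hJcard, hJ1card, hRc]
        push_cast
        have hexp : (1/2 + 3*δ) * (1 + ((Jset m Sn ∩ Finset.Ico (c+1) b).card : ℝ)) =
            (1/2+3*δ) + (1/2+3*δ) * ((Jset m Sn ∩ Finset.Ico (c+1) b).card : ℝ) := by ring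
        rw [hexp]
        have hca2 : ((c - a : ℕ):ℝ) = (c:ℝ) - a := by
          rw [Nat.cast_sub hca']
        rw [hca2] at hp1
        linarith
      · push_neg at hsp
        have hp1 := class_piece_free m Sn δ f hδ0 hub hclass hsp
        have hJ1 := class_J_free m Sn hsp
        have hJ1card : (Jset m Sn ∩ Finset.Ico a (c+1)).card = 0 := by
          rw [hJ1, Finset.card_empty]
        rw [hRcard, hJcard, hJ1card, hRc]
        push_cast
        have hca2 : ((c - a : ℕ):ℝ) = (c:ℝ) - a := by
          rw [Nat.cast_sub hca']
        rw [hca2] at hp1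
        nlinarith [hp1, hp2, hδ0]

lemma split3 (hδ0 : 0 < δ)
    (hub : ∀ k, k < 4*m+2 → f k ≤ 1/2 + δ)
    (hlb : ∀ k, k < 4*m+2 → 1/2 - δ ≤ f k)
    (hblk : ∀ j, j < m → f (4*j) + f (4*j+1) + f (4*j+2) + f (4*j+3) = 2)
    (hδh : δ ≤ 1/10)
    (hS : ∀ k ∈ Sn, k < 4*m+2) (hv : 4*m+1 ∉ Sn)
    {α β : ℕ} (hf : IsFree m Sn α β) :
    ∑ k ∈ Sn, f k ≤ ((Rims Sn 0 (2*m+1)).card : ℝ)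
      + (1/2+3*δ) * ((Jset m Sn).card : ℝ) - ((β-α:ℕ):ℝ)*(1/2-δ) := by
  obtain ⟨hclass, hfree⟩ := hf
  obtain ⟨hab, hb, hcut, hnr, hr⟩ := hclass
  have hclass : IsClass m Sn α β := ⟨hab, hb, hcut, hnr, hr⟩
  -- split the sum into three pieces
  have hUn : ∑ k ∈ Sn, f k = ∑ k ∈ Sn.filter (fun k => 2*0 ≤ k ∧ k < 2*α), f k
      + ∑ k ∈ Sn.filter (fun k => 2*α ≤ k ∧ k < 2*β+2), f k
      + ∑ k ∈ Sn.filter (fun k => 2*(β+1) ≤ k ∧ k < 2*(2*m+1)), f k := by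
    rw [← Finset.sum_union, ← Finset.sum_union]
    · apply Finset.sum_congr _ (fun _ _ => rfl)
      ext k
      simp only [Finset.mem_union, Finset.mem_filter]
      constructor
      · intro hk
        have := hS k hk
        by_cases h1 : k < 2*α
        · exact Or.inl (Or.inl ⟨hk, by omega, h1⟩)
        · by_cases h2 : k < 2*β+2
          · exact Or.inl (Or.inr ⟨hk, by omega, h2⟩)
          · exact Or.inr ⟨hk, by omega, by omega⟩
      · rintro ((⟨hk,_⟩|⟨hk,_⟩)|⟨hk,_⟩) <;> exact hk
    · rw [Finset.disjoint_left]
      intro k h1 h2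
      rw [Finset.mem_union, Finset.mem_filter, Finset.mem_filter] at h1
      rw [Finset.mem_filter] at h2
      rcases h1 with ⟨_,_,h⟩|⟨_,_,h⟩ <;> omega
    · rw [Finset.disjoint_left]
      intro k h1 h2
      rw [Finset.mem_filter] at h1 h2
      omega
  -- bounds for pieces
  have hp1 := ilemma m Sn δ f hδ0 hub hlb hblk hδh α 0 α (by omega) (by omega) (by omega)
    (Or.inl rfl) hcut
  have hp2 := class_piece_free m Sn δ f hδ0 hub hclass hfree
  have hp3 := ilemma m Sn δ f hδ0 hub hlb hblk hδh (2*m+1) (β+1) (2*m+1) (by omega) (by omega)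
    (by omega) (Or.inr (by rw [show 2*(β+1)-1 = 2*β+1 by omega]; exact hnr))
    (Or.inr (by rw [show 2*(2*m+1)-1 = 4*m+1 by omega]; exact hv))
  -- Rims split
  have hRe : Rims Sn 0 (2*m+1) = Rims Sn 0 α ∪ Rims Sn α (β+1) ∪ Rims Sn (β+1) (2*m+1) := by
    rw [Rims, Rims, Rims, Rims, ← Finset.filter_union, ← Finset.filter_union,
      Finset.Ico_union_Ico_eq_Ico (by omega) (by omega),
      Finset.Ico_union_Ico_eq_Ico (by omega) (by omega)]
  have hRd1 : Disjoint (Rims Sn 0 α) (Rims Sn α (β+1)) := by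
    rw [Finset.disjoint_left]
    intro w h1 h2
    rw [Rims, Finset.mem_filter, Finset.mem_Ico] at h1 h2
    omega
  have hRd2 : Disjoint (Rims Sn 0 α ∪ Rims Sn α (β+1)) (Rims Sn (β+1) (2*m+1)) := by
    rw [Finset.disjoint_left]
    intro w h1 h2
    rw [Finset.mem_union] at h1
    rw [Rims, Finset.mem_filter, Finset.mem_Ico] at h2
    rcases h1 with h1|h1 <;> (rw [Rims, Finset.mem_filter, Finset.mem_Ico] at h1; omega)
  have hRcard : (Rims Sn 0 (2*m+1)).card
      = (Rims Sn 0 α).card + (β - α) + (Rims Sn (β+1) (2*m+1)).card := by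
    rw [hRe, Finset.card_union_of_disjoint hRd2, Finset.card_union_of_disjoint hRd1,
      class_rims_card m Sn hclass]
  -- J split
  have hJsub : Jset m Sn ⊆ Finset.Ico 0 (2*m+1) := by
    intro t ht
    rw [Jset, Finset.mem_filter, Finset.mem_range] at ht
    rw [Finset.mem_Ico]
    omega
  have hJe : Jset m Sn = (Jset m Sn ∩ Finset.Ico 0 α) ∪ (Jset m Sn ∩ Finset.Ico α (β+1))
      ∪ (Jset m Sn ∩ Finset.Ico (β+1) (2*m+1)) := by
    rw [← Finset.inter_union_distrib_left, ← Finset.inter_union_distrib_left,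
      Finset.Ico_union_Ico_eq_Ico (by omega) (by omega),
      Finset.Ico_union_Ico_eq_Ico (by omega) (by omega)]
    exact (Finset.inter_eq_left.mpr hJsub).symm
  have hJmid : Jset m Sn ∩ Finset.Ico α (β+1) = ∅ := class_J_free m Sn hfree
  have hJd : Disjoint ((Jset m Sn ∩ Finset.Ico 0 α) ∪ (Jset m Sn ∩ Finset.Ico α (β+1)))
      (Jset m Sn ∩ Finset.Ico (β+1) (2*m+1)) := by
    rw [Finset.disjoint_left]
    intro t h1 h2
    rw [Finset.mem_union, Finset.mem_inter, Finset.mem_inter] at h1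
    rw [Finset.mem_inter, Finset.mem_Ico] at h2
    rcases h1 with h1|h1 <;> (rw [Finset.mem_Ico] at h1; omega)
  have hJd1 : Disjoint (Jset m Sn ∩ Finset.Ico 0 α) (Jset m Sn ∩ Finset.Ico α (β+1)) := by
    rw [Finset.disjoint_left]
    intro t h1 h2
    rw [Finset.mem_inter, Finset.mem_Ico] at h1 h2
    omega
  have hJcard : (Jset m Sn).card = (Jset m Sn ∩ Finset.Ico 0 α).card
      + (Jset m Sn ∩ Finset.Ico (β+1) (2*m+1)).card := by
    conv_lhs => rw [hJe]
    rw [Finset.card_union_of_disjoint hJd, Finset.card_union_of_disjoint hJd1, hJmid]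
    simp
  rw [hUn, hRcard, hJcard]
  have hring : ((β-α:ℕ):ℝ)*(1/2+δ) = ((β-α:ℕ):ℝ) - ((β-α:ℕ):ℝ)*(1/2-δ) := by ring
  rw [hring] at hp2
  push_cast
  push_cast at hp1 hp2 hp3
  linarith

end Pieces

section LA
variable (Sn : Finset ℕ) (S' : Finset (Fin (4*m+2)))

lemma rank_ge (hSn : Sn = S'.image Fin.val) (hv : 4*m+1 ∉ Sn) :
    (Rims Sn 0 (2*m+1)).card + (Jset m Sn).card ≤
      Module.finrank ℝ (Submodule.span ℝ (nbM m '' (S' : Set (Fin (4*m+2))))) := by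
  classical
  set v := Sum.elim (fun w : ↥(Rims Sn 0 (2*m+1)) => erim m w)
      (fun t : ↥(Jset m Sn) => esp m t) with hvdef
  have hli := lin_indep m Sn hv
  have hrange : Set.range v ⊆ nbM m '' (S' : Set (Fin (4*m+2))) := by
    rintro x ⟨i, rfl⟩
    match i with
    | Sum.inl ⟨w, hw⟩ =>
      rw [Rims, Finset.mem_filter, Finset.mem_Ico] at hw
      obtain ⟨⟨_, hw2⟩, hws⟩ := hw
      rw [hSn, Finset.mem_image] at hws
      obtain ⟨j, hj, hjv⟩ := hws
      have hwne : w ≠ 2*m := by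
        intro hcon
        apply hv
        rw [hSn, Finset.mem_image]
        exact ⟨j, hj, by omega⟩
      refine ⟨j, hj, ?_⟩
      rw [hvdef]
      simp only [Sum.elim_inl]
      exact nbM_rim m j w hjv hwne
    | Sum.inr ⟨t, ht⟩ =>
      rw [Jset, Finset.mem_filter, Finset.mem_range] at ht
      obtain ⟨htr, hts, _⟩ := ht
      rw [hSn, Finset.mem_image] at hts
      obtain ⟨j, hj, hjv⟩ := hts
      refine ⟨j, hj, ?_⟩
      rw [hvdef]
      simp only [Sum.elim_inr]
      exact nbM_spoke m j t hjv
  have h1 : Module.finrank ℝ (Submodule.span ℝ (Set.range v)) =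
      (Rims Sn 0 (2*m+1)).card + (Jset m Sn).card := by
    rw [finrank_span_eq_card hli]
    simp [Fintype.card_sum]
  have h2 : Submodule.span ℝ (Set.range v) ≤
      Submodule.span ℝ (nbM m '' (S' : Set (Fin (4*m+2)))) :=
    Submodule.span_mono hrange
  have h3 := Submodule.finrank_mono h2
  omega


lemma negpowsum : ∀ d α, ∑ u ∈ Finset.Icc α (α+2*d), (-1:ℝ)^u = (-1)^α := by
  intro d
  induction d with
  | zero => intro α; simp
  | succ d ihd =>
    intro α
    rw [show α + 2*(d+1) = (α + 2*d + 1) + 1 by ring,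
      Finset.sum_Icc_succ_top (by omega), Finset.sum_Icc_succ_top (by omega), ihd]
    rw [pow_succ]
    ring


lemma vnotspan (hSn : Sn = S'.image Fin.val) (hv : 4*m+1 ∉ Sn)
    {α β : ℕ} (hf : IsFree m Sn α β) (hpar : (β - α) % 2 = 0) :
    (fun t : Fin (2*m+1) => (-1:ℝ)^(t.val)) ∉
      Submodule.span ℝ (nbM m '' (S' : Set (Fin (4*m+2)))) := by
  obtain ⟨⟨hab, hb, hcut, hnr, hr⟩, hfree⟩ := hf
  set T : Finset (Fin (2*m+1)) :=
    Finset.univ.filter (fun t : Fin (2*m+1) => α ≤ t.val ∧ t.val ≤ β) with hT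
  set φ : (Fin (2*m+1) → ℝ) →ₗ[ℝ] ℝ := ∑ t ∈ T, LinearMap.proj t with hφ
  have hφap : ∀ x : Fin (2*m+1) → ℝ, φ x = ∑ t ∈ T, x t := by
    intro x
    rw [hφ]
    simp [LinearMap.sum_apply, LinearMap.proj_apply]
  have hesp : ∀ u (hu : u < 2*m+1), φ (esp m u) = if (⟨u, hu⟩ : Fin (2*m+1)) ∈ T then 1 else 0 := by
    intro u hu
    rw [hφap]
    rw [show (∑ t ∈ T, esp m u t) = ∑ t ∈ T, (if t = ⟨u, hu⟩ then 1 else 0) from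
      Finset.sum_congr rfl (fun t _ => by
        simp only [esp]
        congr 1
        simp [Fin.ext_iff])]
    rw [Finset.sum_ite_eq' T ⟨u, hu⟩ (fun _ => (1:ℝ))]
  have hker : ∀ x ∈ nbM m '' (S' : Set (Fin (4*m+2))), φ x = 0 := by
    rintro x ⟨i, hi, rfl⟩
    have hilt : i.val < 4*m+2 := i.2
    have hine : i.val ≠ 4*m+1 := by
      intro hcon
      apply hv
      rw [hSn, Finset.mem_image]
      exact ⟨i, hi, hcon⟩
    have hiS : i.val ∈ Sn := by
      rw [hSn, Finset.mem_image]
      exact ⟨i, hi, rfl⟩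
    rcases Nat.even_or_odd i.val with ⟨u, hu⟩ | ⟨w, hw⟩
    · -- spoke
      have hu' : i.val = 2*u := by omega
      rw [nbM_spoke m i u hu', hesp u (by omega)]
      rw [if_neg]
      intro hmem
      rw [hT, Finset.mem_filter] at hmem
      obtain ⟨-, h1, h2⟩ := hmem
      exact hfree u h1 h2 (by rwa [← hu'])
    · -- rim
      have hwne : w ≠ 2*m := by omega
      have hwlt : w + 1 < 2*m+1 := by omega
      rw [nbM_rim m i w hw hwne, erim_eq]
      rw [map_sub, hesp w (by omega), hesp (w+1) (by omega)]
      have hc1 : ((⟨w, by omega⟩ : Fin (2*m+1)) ∈ T) ↔ (α ≤ w ∧ w ≤ β) := by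
        rw [hT, Finset.mem_filter]
        simp
      have hc2 : ((⟨w+1, by omega⟩ : Fin (2*m+1)) ∈ T) ↔ (α ≤ w+1 ∧ w+1 ≤ β) := by
        rw [hT, Finset.mem_filter]
        simp
      have hwS : 2*w+1 ∈ Sn := by rwa [← hw]
      -- w = α - 1 impossible; w = β impossible
      have hne1 : ¬(w + 1 = α) := by
        intro hcon
        rcases hcut with h0 | hmiss
        · omega
        · apply hmiss
          rw [show 2*α-1 = 2*w+1 by omega]
          exact hwS
      have hne2 : ¬(w = β) := by
        intro hcon
        apply hnr
        rw [← hcon]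
        exact hwS
      by_cases hin : α ≤ w ∧ w ≤ β
      · rw [if_pos (hc1.mpr hin), if_pos (hc2.mpr ⟨by omega, by omega⟩)]
        ring
      · rw [if_neg (fun h => hin (hc1.mp h)), if_neg ?_]
        · ring
        · intro h
          have := hc2.mp h
          exact hin ⟨by omega, by omega⟩
  intro hmem
  have hsub : Submodule.span ℝ (nbM m '' (S' : Set (Fin (4*m+2)))) ≤ LinearMap.ker φ := by
    rw [Submodule.span_le]
    intro x hx
    rw [SetLike.mem_coe, LinearMap.mem_ker]
    exact hker x hx
  have hzero : φ (fun t : Fin (2*m+1) => (-1:ℝ)^(t.val)) = 0 := by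
    have := hsub hmem
    rwa [LinearMap.mem_ker] at this
  rw [hφap] at hzero
  -- compute the sum
  have hcomp : ∑ t ∈ T, (-1:ℝ)^(t.val) = ∑ u ∈ Finset.Icc α β, (-1:ℝ)^u := by
    rw [hT]
    rw [Finset.sum_filter]
    rw [Fin.sum_univ_eq_sum_range (fun u => if α ≤ u ∧ u ≤ β then (-1:ℝ)^u else 0) (2*m+1)]
    rw [← Finset.sum_filter]
    congr 1
    ext u
    simp only [Finset.mem_filter, Finset.mem_range, Finset.mem_Icc]
    omega
  obtain ⟨d, hd⟩ : ∃ d, β = α + 2*d := ⟨(β-α)/2, by omega⟩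
  rw [hcomp, hd, negpowsum] at hzero
  exact pow_ne_zero α (by norm_num : (-1:ℝ) ≠ 0) hzero


lemma span_full (hSn : Sn = S'.image Fin.val) (hv : 4*m+1 ∉ Sn)
    (hnofree : ¬ ∃ α β, IsFree m Sn α β) :
    Submodule.span ℝ (nbM m '' (S' : Set (Fin (4*m+2)))) = ⊤ := by
  -- every esp u is in the span
  have hmem2 : ∀ k, k ∈ Sn → ∃ i ∈ S', i.val = k := by
    intro k hk
    rw [hSn, Finset.mem_image] at hk
    exact hk
  have hesp : ∀ u, u ≤ 2*m → esp m u ∈ Submodule.span ℝ (nbM m '' (S' : Set (Fin (4*m+2)))) := by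
    intro u hu
    obtain ⟨α, β, hαu, hβ1, hclass⟩ := class_around m Sn hv hu
    obtain ⟨hαβ, hβ2, hcut, hβ3, hrims⟩ := hclass
    have hclass : IsClass m Sn α β := ⟨hαβ, hβ2, hcut, hβ3, hrims⟩
    -- get a spoke in the class
    have hspoke : ∃ t, α ≤ t ∧ t ≤ β ∧ 2*t ∈ Sn := by
      by_contra hcon
      push_neg at hcon
      exact hnofree ⟨α, β, hclass, fun t h1 h2 => hcon t h1 h2⟩
    obtain ⟨t, ht1, ht2, ht3⟩ := hspoke
    -- walk from t
    have hbase : esp m t ∈ Submodule.span ℝ (nbM m '' (S' : Set (Fin (4*m+2)))) := by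
      obtain ⟨i, hi, hiv⟩ := hmem2 (2*t) ht3
      rw [← nbM_spoke m i t hiv]
      exact Submodule.subset_span ⟨i, hi, rfl⟩
    have hrimmem : ∀ w, α ≤ w → w < β →
        erim m w ∈ Submodule.span ℝ (nbM m '' (S' : Set (Fin (4*m+2)))) := by
      intro w h1 h2
      obtain ⟨i, hi, hiv⟩ := hmem2 (2*w+1) (hrims w h1 h2)
      rw [← nbM_rim m i w hiv (by omega)]
      exact Submodule.subset_span ⟨i, hi, rfl⟩
    have hup : ∀ d, t + d ≤ β → esp m (t+d) ∈
        Submodule.span ℝ (nbM m '' (S' : Set (Fin (4*m+2)))) := by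
      intro d
      induction d with
      | zero => intro _; exact hbase
      | succ d ihd =>
        intro hd
        have h1 : esp m (t+d+1) = esp m (t+d) - erim m (t+d) := by
          rw [erim_eq]; ring
        rw [show t + (d+1) = t+d+1 by omega, h1]
        exact Submodule.sub_mem _ (ihd (by omega)) (hrimmem (t+d) (by omega) (by omega))
    have hdown : ∀ d, d ≤ t - α → esp m (t-d) ∈
        Submodule.span ℝ (nbM m '' (S' : Set (Fin (4*m+2)))) := by
      intro d
      induction d with
      | zero => intro _; exact hbase
      | succ d ihd =>
        intro hd
        have heq : esp m (t-(d+1)) = erim m (t-(d+1)) + esp m (t-d) := by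
          rw [erim_eq, show t-(d+1)+1 = t-d by omega]
          ring
        rw [heq]
        exact Submodule.add_mem _ (hrimmem (t-(d+1)) (by omega) (by omega)) (ihd (by omega))
    by_cases htu : t ≤ u
    · have := hup (u - t) (by omega)
      rwa [show t + (u-t) = u by omega] at this
    · have := hdown (t - u) (by omega)
      rwa [show t - (t-u) = u by omega] at this
  rw [eq_top_iff, ← (Pi.basisFun ℝ (Fin (2*m+1))).span_eq]
  rw [Submodule.span_le]
  rintro x ⟨τ, rfl⟩
  have : (Pi.basisFun ℝ (Fin (2*m+1))) τ = esp m τ.val := by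
    funext s
    rw [Pi.basisFun_apply]
    simp [esp, Pi.single_apply, Fin.ext_iff, eq_comm]
  rw [this]
  exact hesp τ.val (by omega)


end LA

end Stmt7

set_option maxHeartbeats 1000000 in
open Stmt7 in
/-- for `0 < δ ≤ 1/10`, `P_δ` is contained in the matroid polytope of `M`. -/
theorem stmt7 (m : ℕ) (δ : ℝ) (hδ0 : 0 < δ) (hδ : δ ≤ 1/10)
    (θ : Fin (4*m+2) → ℝ)
    (hnear : ∀ i, |θ i - 1/2| ≤ δ)
    (hblock : ∀ (j : ℕ) (hj : j < m), θ ⟨4*j, by omega⟩ + θ ⟨4*j+1, by omega⟩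
        + θ ⟨4*j+2, by omega⟩ + θ ⟨4*j+3, by omega⟩ = 2)
    (hlast : θ ⟨4*m, by omega⟩ + θ ⟨4*m+1, by omega⟩ = 1) :
    (∑ i, θ i = 2*m+1) ∧
    ∀ S : Finset (Fin (4*m+2)),
      ∑ i ∈ S, θ i ≤
        (Module.finrank ℝ (Submodule.span ℝ (nbM m '' (S : Set (Fin (4*m+2))))) : ℝ) := by
  classical
  set θn : ℕ → ℝ := fun k => if h : k < 4*m+2 then θ ⟨k, h⟩ else 0 with hθn
  have hθni : ∀ (i : Fin (4*m+2)), θn i.val = θ i := by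
    intro i
    rw [hθn]
    simp only [dif_pos i.isLt]
  have hub : ∀ k, k < 4*m+2 → θn k ≤ 1/2 + δ := by
    intro k hk
    rw [hθn]; simp only [dif_pos hk]
    have := abs_le.mp (hnear ⟨k, hk⟩)
    linarith [this.2]
  have hlb : ∀ k, k < 4*m+2 → 1/2 - δ ≤ θn k := by
    intro k hk
    rw [hθn]; simp only [dif_pos hk]
    have := abs_le.mp (hnear ⟨k, hk⟩)
    linarith [this.1]
  have hblk : ∀ j, j < m → θn (4*j) + θn (4*j+1) + θn (4*j+2) + θn (4*j+3) = 2 := by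
    intro j hj
    rw [hθn]
    simp only [dif_pos (show 4*j < 4*m+2 by omega), dif_pos (show 4*j+1 < 4*m+2 by omega),
      dif_pos (show 4*j+2 < 4*m+2 by omega), dif_pos (show 4*j+3 < 4*m+2 by omega)]
    exact hblock j hj
  have hpair : θn (4*m) + θn (4*m+1) = 1 := by
    rw [hθn]
    simp only [dif_pos (show 4*m < 4*m+2 by omega), dif_pos (show 4*m+1 < 4*m+2 by omega)]
    exact hlast
  have hsum4 : ∀ p, p ≤ m → ∑ k ∈ Finset.range (4*p), θn k = 2*(p:ℝ) := by
    intro p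
    induction p with
    | zero => intro _; simp
    | succ p ih =>
      intro hp
      rw [show 4*(p+1) = 4*p+1+1+1+1 by ring, Finset.sum_range_succ, Finset.sum_range_succ,
        Finset.sum_range_succ, Finset.sum_range_succ, ih (by omega)]
      have := hblk p (by omega)
      push_cast
      linarith
  have htotal : ∑ i, θ i = 2*(m:ℝ)+1 := by
    have h1 : ∑ i, θ i = ∑ i : Fin (4*m+2), θn i.val :=
      Finset.sum_congr rfl (fun i _ => (hθni i).symm)
    rw [h1, Fin.sum_univ_eq_sum_range (fun k => θn k) (4*m+2),
      show 4*m+2 = (4*m+1)+1 by ring, Finset.sum_range_succ,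
      show 4*m+1 = (4*m)+1 by ring, Finset.sum_range_succ, hsum4 m (le_refl m)]
    linarith [hpair]
  have hθpos : ∀ i, (0:ℝ) ≤ θ i := by
    intro i
    have := abs_le.mp (hnear i)
    linarith [this.1]
  refine ⟨htotal, ?_⟩
  intro S
  set vidx : Fin (4*m+2) := ⟨4*m+1, by omega⟩ with hvidx
  set Sv := S.erase vidx with hSv
  set Sn := Sv.image Fin.val with hSn
  have hv : 4*m+1 ∉ Sn := by
    rw [hSn]
    intro h
    rw [Finset.mem_image] at h
    obtain ⟨i, hi, hiv⟩ := h
    have hieq : i = vidx := Fin.ext (by rw [hiv])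
    rw [hieq] at hi
    exact (Finset.notMem_erase vidx S) hi
  have hS : ∀ k ∈ Sn, k < 4*m+2 := by
    intro k hk
    rw [hSn, Finset.mem_image] at hk
    obtain ⟨i, _, rfl⟩ := hk
    exact i.isLt
  have hSveq : ∑ k ∈ Sn, θn k = ∑ i ∈ Sv, θ i := by
    rw [hSn, Finset.sum_image (fun x _ y _ h => Fin.ext h)]
    exact Finset.sum_congr rfl (fun i _ => hθni i)
  have hmono : Submodule.span ℝ (nbM m '' (Sv : Set (Fin (4*m+2)))) ≤
      Submodule.span ℝ (nbM m '' (S : Set (Fin (4*m+2)))) :=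
    Submodule.span_mono (Set.image_mono
      (Finset.coe_subset.mpr (Finset.erase_subset _ _)))
  have hrankS : (Rims Sn 0 (2*m+1)).card + (Jset m Sn).card ≤
      Module.finrank ℝ (Submodule.span ℝ (nbM m '' (S : Set (Fin (4*m+2))))) :=
    le_trans (rank_ge m Sn Sv hSn hv) (Submodule.finrank_mono hmono)
  have hGlob : ∑ k ∈ Sn, θn k ≤ ((Rims Sn 0 (2*m+1)).card : ℝ)
      + (1/2+3*δ) * ((Jset m Sn).card : ℝ) := by
    have h1 := ilemma m Sn δ θn hδ0 hub hlb hblk hδ (2*m+1) 0 (2*m+1) (by omega) (by omega)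
      (le_refl _) (Or.inl rfl) (Or.inr (by rw [show 2*(2*m+1)-1 = 4*m+1 by omega]; exact hv))
    have h2 : Sn.filter (fun k => 2*0 ≤ k ∧ k < 2*(2*m+1)) = Sn := by
      apply Finset.filter_true_of_mem
      intro k hk
      exact ⟨by omega, by have := hS k hk; omega⟩
    have h3 : Jset m Sn ∩ Finset.Ico 0 (2*m+1) = Jset m Sn := by
      rw [Finset.inter_eq_left]
      intro t ht
      rw [Jset, Finset.mem_filter, Finset.mem_range] at ht
      rw [Finset.mem_Ico]
      omega
    rw [h2, h3] at h1
    exact h1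
  have hJpos : (0:ℝ) ≤ ((Jset m Sn).card : ℝ) := Nat.cast_nonneg _
  by_cases hfc : ∃ α β, IsFree m Sn α β
  · obtain ⟨α, β, hfree⟩ := hfc
    by_cases hvS : vidx ∈ S
    · -- v ∈ S
      have hsplitsum : ∑ i ∈ S, θ i = ∑ k ∈ Sn, θn k + θ vidx := by
        rw [hSveq, hSv]
        exact (Finset.sum_erase_add S θ hvS).symm
      have hvval : θ vidx ≤ 1/2 + δ := by
        have := abs_le.mp (hnear vidx)
        linarith [this.2]
      by_cases heven : ∃ a b, IsFree m Sn a b ∧ (b - a) % 2 = 0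
      · obtain ⟨a, b, hf', hp'⟩ := heven
        have hnot := vnotspan m Sn Sv hSn hv hf' hp'
        have hvvec : nbM m vidx = fun t : Fin (2*m+1) => (-1:ℝ)^(t.val) :=
          nbM_v m vidx rfl
        have hltspan : Submodule.span ℝ (nbM m '' (Sv : Set (Fin (4*m+2)))) <
            Submodule.span ℝ (nbM m '' (S : Set (Fin (4*m+2)))) := by
          refine lt_of_le_of_ne hmono ?_
          intro heq
          apply hnot
          rw [heq]
          exact Submodule.subset_span ⟨vidx, hvS, hvvec⟩
        have hltrank := Submodule.finrank_lt_finrank_of_lt hltspan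
        have hrankSv := rank_ge m Sn Sv hSn hv
        have hrank1 : (Rims Sn 0 (2*m+1)).card + (Jset m Sn).card + 1 ≤
            Module.finrank ℝ (Submodule.span ℝ (nbM m '' (S : Set (Fin (4*m+2))))) := by
          omega
        rw [hsplitsum]
        have h5 : (((Rims Sn 0 (2*m+1)).card : ℝ) + ((Jset m Sn).card : ℝ) + 1) ≤
            (Module.finrank ℝ (Submodule.span ℝ (nbM m '' (S : Set (Fin (4*m+2))))) : ℝ) := by
          exact_mod_cast hrank1
        have hh : (0:ℝ) ≤ (1/2-3*δ) * ((Jset m Sn).card : ℝ) :=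
          mul_nonneg (by linarith) hJpos
        nlinarith [hGlob, hvval]
      · push_neg at heven
        have hodd : (β - α) % 2 = 1 := by
          rcases Nat.mod_two_eq_zero_or_one (β - α) with h|h
          · exact absurd h (heven α β hfree)
          · exact h
        obtain ⟨a, b, _, hab', _, hclass', hpar'⟩ := parlem m Sn (2*m+1) 0 (2*m+1)
          (by omega) (by omega) (le_refl _) (Or.inl rfl)
          (Or.inr (by rw [show 2*(2*m+1)-1 = 4*m+1 by omega]; exact hv)) (by omega)
        have hsp' : ∃ t, a ≤ t ∧ t ≤ b ∧ 2*t ∈ Sn := by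
          by_contra hcon
          push_neg at hcon
          exact (heven a b ⟨hclass', fun t h1 h2 => hcon t h1 h2⟩) hpar'
        obtain ⟨t0, hJeq⟩ := class_J_spoke m Sn hclass' hsp'
        have hJ1 : 1 ≤ (Jset m Sn).card := by
          have h1 : (Jset m Sn ∩ Finset.Ico a (b+1)).card = 1 := by
            rw [hJeq]; simp
          have h2 := Finset.card_le_card
            (Finset.inter_subset_left (s₁ := Jset m Sn) (s₂ := Finset.Ico a (b+1)))
          omega
        have hsp3 := split3 m Sn δ θn hδ0 hub hlb hblk hδ hS hv hfree
        have hba1 : 1 ≤ β - α := by omega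
        rw [hsplitsum]
        have hc1 : (1:ℝ) ≤ ((Jset m Sn).card : ℝ) := by exact_mod_cast hJ1
        have hc2 : (1:ℝ) ≤ ((β - α : ℕ) : ℝ) := by exact_mod_cast hba1
        have hfin : (((Rims Sn 0 (2*m+1)).card : ℝ) + ((Jset m Sn).card : ℝ)) ≤
            (Module.finrank ℝ (Submodule.span ℝ (nbM m '' (S : Set (Fin (4*m+2))))) : ℝ) := by
          exact_mod_cast hrankS
        have hh1 : (0:ℝ) ≤ (1/2-3*δ) * (((Jset m Sn).card : ℝ) - 1) :=
          mul_nonneg (by linarith) (by linarith)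
        have hh2 : (0:ℝ) ≤ (1/2-δ) * (((β - α : ℕ) : ℝ) - 1) :=
          mul_nonneg (by linarith) (by linarith)
        nlinarith [hsp3, hvval]
    · -- v ∉ S
      have hSveq2 : Sv = S := by
        rw [hSv]
        exact Finset.erase_eq_of_notMem hvS
      have heq : ∑ i ∈ S, θ i = ∑ k ∈ Sn, θn k := by
        rw [hSveq]
        exact Finset.sum_congr hSveq2.symm (fun _ _ => rfl)
      rw [heq]
      have h5 : (((Rims Sn 0 (2*m+1)).card : ℝ) + ((Jset m Sn).card : ℝ)) ≤
          (Module.finrank ℝ (Submodule.span ℝ (nbM m '' (S : Set (Fin (4*m+2))))) : ℝ) := by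
        exact_mod_cast hrankS
      have hh : (0:ℝ) ≤ (1/2-3*δ) * ((Jset m Sn).card : ℝ) :=
        mul_nonneg (by linarith) hJpos
      linarith [hGlob, h5, hh]
  · -- no free class : full rank
    have hfull := span_full m Sn Sv hSn hv hfc
    have htop : Submodule.span ℝ (nbM m '' (S : Set (Fin (4*m+2)))) = ⊤ := by
      rw [eq_top_iff, ← hfull]
      exact hmono
    rw [htop]
    have hfr : Module.finrank ℝ (⊤ : Submodule ℝ (Fin (2*m+1) → ℝ)) = 2*m+1 := by
      rw [finrank_top, Module.finrank_fintype_fun_eq_card, Fintype.card_fin]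
    rw [hfr]
    have hle : ∑ i ∈ S, θ i ≤ ∑ i, θ i :=
      Finset.sum_le_sum_of_subset_of_nonneg (Finset.subset_univ S) (fun i _ _ => hθpos i)
    rw [htotal] at hle
    push_cast
    linarith
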